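/- Let G be the group ⟨a, b | a b a b^{-1} a^{-1} b a b = b a b a^{-1} b^{-1} a b a, (b a b^{-1} a^{-1} b^{-1} a b a^{-1})^n a^m = 1⟩ with m ≥ 2n ≥ 2, and let Q be any quotient of G in which the image of a is non-trivial. Then the image of a is a generalized torsion element of Q. -/

import Mathlib

/-- A generalized torsion element: a non-identity element some non-empty finite
product of whose conjugates is the identity. -/
def IsGenTorsion {G : Type*} [Group G] (g : G) : Prop :=
  g ≠ 1 ∧ ∃ l : List G, l ≠ [] ∧ (∀ x ∈ l, ∃ v : G, x = v⁻¹ * g * v) ∧ l.prod = 1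

/-- The two relators of
⟨a, b | a b a b⁻¹ a⁻¹ b a b = b a b a⁻¹ b⁻¹ a b a, (b a b⁻¹ a⁻¹ b⁻¹ a b a⁻¹)ⁿ aᵐ = 1⟩,
with `a = FreeGroup.of 0`, `b = FreeGroup.of 1`. -/
def whiteheadRels (m n : ℕ) : Set (FreeGroup (Fin 2)) :=
  let a : FreeGroup (Fin 2) := FreeGroup.of 0
  let b : FreeGroup (Fin 2) := FreeGroup.of 1
  { (a * b * a * b⁻¹ * a⁻¹ * b * a * b) * (b * a * b * a⁻¹ * b⁻¹ * a * b * a)⁻¹,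
    (b * a * b⁻¹ * a⁻¹ * b⁻¹ * a * b * a⁻¹) ^ n * a ^ m }

section aux
variable {Q : Type*} [Group Q] (A B : Q)

/-- The pair of conjugates of `A` contributed by the `k`-th copy of
`D = B * A * B⁻¹ * A⁻¹ * B⁻¹ * A * B * A⁻¹` after pushing the inverses of `A` to the right. -/
def whPair (k : ℕ) : List Q :=
  [(B⁻¹ * A ^ (2*k))⁻¹ * A * (B⁻¹ * A ^ (2*k)),
   (B * A ^ (2*k+1))⁻¹ * A * (B * A ^ (2*k+1))]

lemma whProd (j : ℕ) :
    ((List.range j).flatMap (whPair A B)).prod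
      = (B * A * B⁻¹ * A⁻¹ * B⁻¹ * A * B * A⁻¹) ^ j * A ^ (2*j) := by
  induction j with
  | zero => simp
  | succ j ih =>
      rw [List.range_succ, List.flatMap_append, List.prod_append, ih]
      simp only [List.flatMap_cons, List.flatMap_nil, List.append_nil, whPair, List.prod_cons,
        List.prod_nil]
      have h2 : 2*(j+1) = 2*j + 1 + 1 := by ring
      rw [pow_succ _ j, h2, pow_succ A (2*j+1), pow_succ A (2*j)]
      group
end aux

/-- In any quotient Q of G in which the image of a is non-trivial, that image is a
generalized torsion element. -/
theorem whitehead_filling_genTorsion_quotient (m n : ℕ) (hn : 1 ≤ n) (hm : 2 * n ≤ m)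
    {Q : Type*} [Group Q] (φ : PresentedGroup (whiteheadRels m n) →* Q)
    (hφ : Function.Surjective φ)
    (ha : φ (PresentedGroup.of 0) ≠ 1) :
    IsGenTorsion (φ (PresentedGroup.of 0)) := by
  set A := φ (PresentedGroup.of 0) with hA
  set B := φ (PresentedGroup.of 1) with hB
  have hrel : (B * A * B⁻¹ * A⁻¹ * B⁻¹ * A * B * A⁻¹) ^ n * A ^ m = 1 := by
    have hmem : ((FreeGroup.of 1 * FreeGroup.of 0 * (FreeGroup.of 1)⁻¹ * (FreeGroup.of 0)⁻¹ *
        (FreeGroup.of 1)⁻¹ * FreeGroup.of 0 * FreeGroup.of 1 * (FreeGroup.of 0)⁻¹ :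
        FreeGroup (Fin 2)) ^ n * FreeGroup.of 0 ^ m) ∈ whiteheadRels m n := by
      right; rfl
    have h1 : PresentedGroup.mk (whiteheadRels m n)
        ((FreeGroup.of 1 * FreeGroup.of 0 * (FreeGroup.of 1)⁻¹ * (FreeGroup.of 0)⁻¹ *
        (FreeGroup.of 1)⁻¹ * FreeGroup.of 0 * FreeGroup.of 1 * (FreeGroup.of 0)⁻¹) ^ n *
        FreeGroup.of 0 ^ m) = 1 := by
      have := Subgroup.subset_normalClosure hmem
      exact (QuotientGroup.eq_one_iff _).mpr this
    have := congrArg φ h1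
    simpa [hA, hB, PresentedGroup.of] using this
  refine ⟨ha, (List.range n).flatMap (whPair A B) ++ List.replicate (m - 2*n) A, ?_, ?_, ?_⟩
  · have h0 : ((B⁻¹ * A ^ (2*0))⁻¹ * A * (B⁻¹ * A ^ (2*0)))
        ∈ (List.range n).flatMap (whPair A B) ++ List.replicate (m - 2*n) A :=
      List.mem_append_left _ (List.mem_flatMap.mpr
        ⟨0, List.mem_range.mpr hn, List.mem_cons_self⟩)
    intro h
    rw [h] at h0
    exact absurd h0 List.not_mem_nil
  · intro x hx
    rcases List.mem_append.mp hx with h | h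
    · simp only [List.mem_flatMap, List.mem_range, whPair, List.mem_cons, List.mem_singleton] at h
      obtain ⟨k, -, h | h | h⟩ := h
      · exact ⟨_, h⟩
      · exact ⟨_, h⟩
      · simp at h
    · exact ⟨1, by simpa using (List.eq_of_mem_replicate h)⟩
  · rw [List.prod_append, whProd, List.prod_replicate, mul_assoc, ← pow_add]
    have : 2*n + (m - 2*n) = m := by omega
    rw [this, hrel]
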